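/- For all positive integers m and n, P(ord(π_n) = m) = (1/n) · ∑_{0 ≤ x < n, (n-x) ∣ m} P(lcm(ord(π_x), n−x) = m), where π_x is a uniformly random permutation of {1,...,x} (and ord of the empty permutation is 1). -/

import Mathlib

open scoped Classical
open Equiv Equiv.Perm Finset

namespace ProbOrderRec
variable {n : ℕ}

noncomputable def orb (π : Perm (Fin n)) (z : Fin n) : Finset (Fin n) :=
  univ.filter (fun b => π.SameCycle z b)

lemma mem_orb {π : Perm (Fin n)} {z b : Fin n} : b ∈ orb π z ↔ π.SameCycle z b := by
  simp [orb]

lemma z_mem_orb (π : Perm (Fin n)) (z : Fin n) : z ∈ orb π z := mem_orb.2 (Perm.SameCycle.refl _ _)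

lemma apply_mem_orb {π : Perm (Fin n)} {z b : Fin n} : π b ∈ orb π z ↔ b ∈ orb π z := by
  simp [mem_orb, Perm.sameCycle_apply_right]

lemma pow_mem_orb {π : Perm (Fin n)} {z : Fin n} (j : ℕ) : (π ^ j) z ∈ orb π z :=
  mem_orb.2 ⟨j, by simp⟩

lemma isCycleOn_orb (π : Perm (Fin n)) (z : Fin n) : π.IsCycleOn (orb π z : Set (Fin n)) := by
  constructor
  · refine ⟨fun b hb => ?_, π.injective.injOn, fun b hb => ⟨π⁻¹ b, ?_, (Perm.eq_inv_iff_eq (f := π) (x := π⁻¹ b) (y := b)).1 rfl⟩⟩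
    · simpa using apply_mem_orb.2 (by simpa using hb)
    · simp only [Finset.mem_coe] at hb ⊢
      rw [← apply_mem_orb, (Perm.eq_inv_iff_eq (f := π) (x := π⁻¹ b) (y := b)).1 rfl]; exact hb
  · intro a ha b hb
    simp only [Finset.mem_coe, mem_orb] at ha hb
    exact ha.symm.trans hb

lemma compl_invariant {π : Perm (Fin n)} {z : Fin n} {s : Finset (Fin n)} (h : orb π z = s) :
    ∀ a : Fin n, a ∈ (sᶜ : Finset (Fin n)) ↔ π a ∈ (sᶜ : Finset (Fin n)) := by
  intro a
  simp only [Finset.mem_compl, ← h]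
  rw [apply_mem_orb]

section Decomp

variable {s : Finset (Fin n)} {x : ℕ} (hx : (sᶜ : Finset (Fin n)).card = x)

/-- relabeling equiv between `Fin x` and the complement of `s` -/
noncomputable def cEquiv : Fin x ≃ {a : Fin n // a ∈ (sᶜ : Finset (Fin n))} :=
  ((sᶜ : Finset (Fin n)).orderIsoOfFin hx).toEquiv

noncomputable def res (π : Perm (Fin n))
    (h : ∀ a : Fin n, a ∈ (sᶜ : Finset (Fin n)) ↔ π a ∈ (sᶜ : Finset (Fin n))) : Perm (Fin x) :=
  ((cEquiv hx).permCongr).symm (π.subtypePerm (fun a => (h a).symm))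

lemma res_apply (π : Perm (Fin n)) (h) (j : Fin x) :
    ((cEquiv hx (res hx π h j)) : Fin n) = π (cEquiv hx j) := by
  simp [res, Equiv.permCongr_apply, Perm.subtypePerm_apply]

noncomputable def extP (σ : Perm (Fin x)) : Perm (Fin n) :=
  σ.extendDomain (cEquiv hx)

lemma extP_apply_mem (σ : Perm (Fin x)) {a : Fin n} (ha : a ∈ s) : extP hx σ a = a := by
  apply Perm.extendDomain_apply_not_subtype
  simpa using ha

lemma extP_apply_not_mem (σ : Perm (Fin x)) {a : Fin n} (ha : a ∉ s) :
    extP hx σ a = (cEquiv hx (σ ((cEquiv hx).symm ⟨a, by simpa using ha⟩)) : Fin n) := by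
  apply Perm.extendDomain_apply_subtype

lemma extP_not_mem (σ : Perm (Fin x)) {a : Fin n} (ha : a ∉ s) : extP hx σ a ∉ s := by
  rw [extP_apply_not_mem hx σ ha]
  have h2 := (cEquiv hx (σ ((cEquiv hx).symm ⟨a, by simpa using ha⟩))).2
  rw [Finset.mem_compl] at h2
  exact h2

lemma orderOf_extP (σ : Perm (Fin x)) : orderOf (extP hx σ) = orderOf σ :=
  orderOf_injective (Perm.extendDomainHom (cEquiv hx))
    (Perm.extendDomainHom_injective (cEquiv hx)) σ

section A
variable {z : Fin n} (hz : z ∈ s)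
  {c : Perm (Fin n)} (hc : c.IsCycleOn (s : Set (Fin n)))
  (hcfix : ∀ a : Fin n, a ∉ s → c a = a)
  (σ : Perm (Fin x))

lemma mul_apply_mem {a : Fin n} (ha : a ∈ s) : (c * extP hx σ) a = c a := by
  rw [Perm.mul_apply, extP_apply_mem hx σ ha]

include hcfix in
lemma mul_apply_not_mem {a : Fin n} (ha : a ∉ s) : (c * extP hx σ) a = extP hx σ a := by
  rw [Perm.mul_apply]; exact hcfix _ (extP_not_mem hx σ ha)

include hz hc in
lemma mul_pow_apply (j : ℕ) : ((c * extP hx σ) ^ j) z = (c ^ j) z ∧ (c ^ j) z ∈ s := by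
  induction j with
  | zero => simpa using hz
  | succ j ih =>
    obtain ⟨h1, h2⟩ := ih
    have hcs : c ((c ^ j) z) ∈ s := hc.1.1 h2
    constructor
    · have hstep : ((c * extP hx σ) ^ (j+1)) z = (c * extP hx σ) (((c * extP hx σ) ^ j) z) := by
        rw [pow_succ']; rfl
      rw [hstep, h1, mul_apply_mem hx σ h2, pow_succ']; rfl
    · rw [pow_succ']; exact hcs

include hz hc in
lemma orb_mul : orb (c * extP hx σ) z = s := by
  ext b
  rw [mem_orb]
  constructor
  · intro hSC
    obtain ⟨i, _, rfl⟩ := hSC.exists_pow_eq'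
    rw [(mul_pow_apply hx hz hc σ i).1]
    exact (mul_pow_apply hx hz hc σ i).2
  · intro hb
    obtain ⟨i, _, hci⟩ := Equiv.Perm.IsCycleOn.exists_pow_eq hc hz hb
    exact ⟨(i : ℤ), by rw [zpow_natCast, (mul_pow_apply hx hz hc σ i).1, hci]⟩

include hcfix in
lemma res_mul (h : ∀ a : Fin n, a ∈ (sᶜ : Finset (Fin n)) ↔ (c * extP hx σ) a ∈ (sᶜ : Finset (Fin n))) :
    res hx (c * extP hx σ) h = σ := by
  apply Equiv.ext
  intro j
  apply (cEquiv hx).injective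
  apply Subtype.ext
  rw [res_apply]
  have hj : ((cEquiv hx j : Fin n)) ∉ s := by
    have := (cEquiv hx j).2; rw [Finset.mem_compl] at this; exact this
  rw [mul_apply_not_mem hx hcfix σ hj, extP_apply_not_mem hx σ hj]
  congr 1
  ext : 1
  simp

include hcfix in
lemma disjoint_mul : c.Disjoint (extP hx σ) := by
  intro a
  by_cases ha : a ∈ s
  · exact Or.inr (extP_apply_mem hx σ ha)
  · exact Or.inl (hcfix a ha)

include hcfix in
lemma orderOf_mul : orderOf (c * extP hx σ) = Nat.lcm (orderOf c) (orderOf σ) := by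
  rw [(disjoint_mul hx hcfix σ).orderOf, orderOf_extP]

end A

section B
variable {z : Fin n} {π : Perm (Fin n)} (horb : orb π z = s)

include horb in
lemma z_mem_s : z ∈ s := horb ▸ z_mem_orb π z

include horb in
lemma cycleOf_fix_not_mem {a : Fin n} (ha : a ∉ s) : π.cycleOf z a = a := by
  apply Perm.cycleOf_apply_of_not_sameCycle
  rw [← horb] at ha
  exact fun hSC => ha (mem_orb.2 hSC)

include horb in
lemma cycleOf_apply_mem {a : Fin n} (ha : a ∈ s) : π.cycleOf z a = π a :=
  Perm.SameCycle.cycleOf_apply (mem_orb.1 (horb ▸ ha))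

include horb in
lemma isCycleOn_cycleOf' : (π.cycleOf z).IsCycleOn (s : Set (Fin n)) := by
  constructor
  · refine ⟨fun a ha => ?_, (π.cycleOf z).injective.injOn, fun b hb => ⟨π⁻¹ b, ?_, ?_⟩⟩
    · simp only [Finset.mem_coe] at ha ⊢
      rw [cycleOf_apply_mem horb ha, ← horb] at *
      exact apply_mem_orb.2 (by rwa [← horb] at ha)
    · simp only [Finset.mem_coe] at hb ⊢
      rw [← horb] at hb ⊢
      rw [← apply_mem_orb (π := π), (Perm.eq_inv_iff_eq (f := π) (x := π⁻¹ b) (y := b)).1 rfl]; exact hb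
    · have hinv : π⁻¹ b ∈ s := by
        rw [← horb] at hb ⊢
        rw [← apply_mem_orb (π := π), (Perm.eq_inv_iff_eq (f := π) (x := π⁻¹ b) (y := b)).1 rfl]; exact hb
      rw [cycleOf_apply_mem horb hinv, (Perm.eq_inv_iff_eq (f := π) (x := π⁻¹ b) (y := b)).1 rfl]
  · intro a ha b hb
    simp only [Finset.mem_coe, ← horb, mem_orb] at ha hb
    obtain ⟨i, hi⟩ := ha
    obtain ⟨j, hj⟩ := hb
    have h1 : Perm.SameCycle (π.cycleOf z) z a := ⟨i, by rw [Perm.cycleOf_zpow_apply_self, hi]⟩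
    have h2 : Perm.SameCycle (π.cycleOf z) z b := ⟨j, by rw [Perm.cycleOf_zpow_apply_self, hj]⟩
    exact h1.symm.trans h2

include horb in
lemma decomp_eq (h : ∀ a : Fin n, a ∈ (sᶜ : Finset (Fin n)) ↔ π a ∈ (sᶜ : Finset (Fin n))) :
    π = π.cycleOf z * extP hx (res hx π h) := by
  apply Equiv.ext
  intro a
  by_cases ha : a ∈ s
  · rw [Perm.mul_apply, extP_apply_mem hx _ ha, cycleOf_apply_mem horb ha]
  · have hext : extP hx (res hx π h) a = π a := by
      rw [extP_apply_not_mem hx _ ha, res_apply]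
      congr 1
      ext : 1
      simp
    have hπa : π a ∉ s := by
      rw [← horb] at ha ⊢
      exact fun hmem => ha (apply_mem_orb.1 hmem)
    rw [Perm.mul_apply, hext, cycleOf_fix_not_mem horb hπa]

include horb in
lemma orderOf_cycleOf_eq_card : orderOf (π.cycleOf z) = s.card := by
  by_cases hfz : π z = z
  · have hs : s = {z} := by
      rw [← horb]
      ext b
      simp only [mem_orb, Finset.mem_singleton]
      constructor
      · rintro ⟨i, hi⟩
        rw [← hi, Perm.zpow_apply_eq_self_of_apply_eq_self hfz]
      · rintro rfl; exact Perm.SameCycle.refl _ _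
    rw [hs, Finset.card_singleton, (Perm.cycleOf_eq_one_iff π).2 hfz, orderOf_one]
  · have hcy := Equiv.Perm.isCycle_cycleOf π hfz
    rw [hcy.orderOf]
    congr 1
    ext b
    rw [Perm.mem_support_cycleOf_iff, ← horb, mem_orb]
    simp [Perm.mem_support, hfz]

include horb in
lemma orderOf_decomp (h : ∀ a : Fin n, a ∈ (sᶜ : Finset (Fin n)) ↔ π a ∈ (sᶜ : Finset (Fin n))) :
    orderOf π = Nat.lcm s.card (orderOf (res hx π h)) := by
  conv_lhs => rw [decomp_eq hx horb h]
  rw [orderOf_mul hx (fun a ha => cycleOf_fix_not_mem horb ha), orderOf_cycleOf_eq_card horb]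

include horb in
lemma isCycleOn_s : π.IsCycleOn (s : Set (Fin n)) := by
  rw [← horb]; exact isCycleOn_orb π z

include horb in
lemma pow_mem_erase {k : ℕ} (hk : s.card = k) {j : ℕ} (hj0 : 0 < j) (hjk : j < k) :
    (π ^ j) z ∈ s.erase z := by
  have hmem : (π ^ j) z ∈ s := horb ▸ pow_mem_orb j
  refine Finset.mem_erase.2 ⟨?_, hmem⟩
  intro hEq
  have hdvd := ((isCycleOn_s horb).pow_apply_eq (z_mem_s horb)).1 hEq
  rw [hk] at hdvd
  exact absurd (Nat.le_of_dvd hj0 hdvd) (not_le.2 hjk)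

include horb in
lemma pow_inj {k : ℕ} (hk : s.card = k) {i j : ℕ} (hi : i < k) (hj : j < k)
    (h : (π ^ i) z = (π ^ j) z) : i = j := by
  have hmod := ((isCycleOn_s horb).pow_apply_eq_pow_apply (z_mem_s horb)).1 h
  rw [hk] at hmod
  have := hmod.eq_of_lt_of_lt hi hj
  exact this

omit horb in
lemma apply_eq_of_not_mem (h : ∀ a : Fin n, a ∈ (sᶜ : Finset (Fin n)) ↔ π a ∈ (sᶜ : Finset (Fin n)))
    {a : Fin n} (ha : a ∉ s) :
    π a = ↑(cEquiv hx (res hx π h ((cEquiv hx).symm ⟨a, by simpa using ha⟩))) := by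
  rw [res_apply]
  congr 1
  simp

end B
end Decomp

lemma fiber_card (m : ℕ) {z : Fin n} {s : Finset (Fin n)} (hzs : z ∈ s) {x k : ℕ}
    (hx : (sᶜ : Finset (Fin n)).card = x) (hk : s.card = k) :
    (univ.filter (fun π : Perm (Fin n) => orderOf π = m ∧ orb π z = s)).card
      = if k ∣ m then (k - 1).factorial *
          (univ.filter (fun σ : Perm (Fin x) => Nat.lcm (orderOf σ) k = m)).card else 0 := by
  have hk1 : 1 ≤ k := hk ▸ Finset.card_pos.2 ⟨z, hzs⟩
  have horder : ∀ (π : Perm (Fin n)) (horb : orb π z = s),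
      orderOf π = Nat.lcm k (orderOf (res hx π (compl_invariant horb))) := by
    intro π horb
    rw [← hk]
    exact orderOf_decomp hx horb (compl_invariant horb)
  by_cases hkm : k ∣ m
  · rw [if_pos hkm]
    rw [Finset.card_bij (fun π hπ => (⟨fun j : Fin (k-1) => (⟨(π ^ ((j : ℕ) + 1)) z, by
          have horb : orb π z = s := (Finset.mem_filter.1 hπ).2.2
          exact pow_mem_erase horb hk (Nat.succ_pos _)
            (by have := j.2; omega)⟩ : {a : Fin n // a ∈ s.erase z}),
        fun j₁ j₂ hEq => by
          have horb : orb π z = s := (Finset.mem_filter.1 hπ).2.2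
          have : ((j₁ : ℕ) + 1) = ((j₂ : ℕ) + 1) := by
            refine pow_inj horb hk (by have := j₁.2; omega) (by have := j₂.2; omega) ?_
            exact congrArg Subtype.val hEq
          exact Fin.ext (by omega)⟩,
        res hx π (compl_invariant (Finset.mem_filter.1 hπ).2.2)) :
        ∀ π ∈ univ.filter (fun π : Perm (Fin n) => orderOf π = m ∧ orb π z = s),
          (Fin (k-1) ↪ {a : Fin n // a ∈ s.erase z}) × Perm (Fin x)) ?_ ?_ ?_]
    · rw [Finset.card_product, Finset.card_univ, Fintype.card_embedding_eq, Fintype.card_coe,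
        Finset.card_erase_of_mem hzs, hk, Fintype.card_fin, Nat.descFactorial_self]
    · -- membership
      intro π hπ
      obtain ⟨-, hord, horb⟩ := Finset.mem_filter.1 hπ
      refine Finset.mem_product.2 ⟨Finset.mem_univ _, Finset.mem_filter.2 ⟨Finset.mem_univ _, ?_⟩⟩
      rw [Nat.lcm_comm, ← horder π horb, hord]
    · -- injectivity
      intro π₁ hπ₁ π₂ hπ₂ hEq
      obtain ⟨-, hord₁, horb₁⟩ := Finset.mem_filter.1 hπ₁
      obtain ⟨-, hord₂, horb₂⟩ := Finset.mem_filter.1 hπ₂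
      obtain ⟨hg, hres⟩ := Prod.mk.injEq .. ▸ hEq
      have hpow : ∀ j, j < k → (π₁ ^ j) z = (π₂ ^ j) z := by
        intro j hj
        rcases Nat.eq_zero_or_pos j with rfl | hj0
        · rfl
        · have hj' : j - 1 < k - 1 := by omega
          have := congrFun (congrArg (fun (g : Fin (k-1) ↪ {a : Fin n // a ∈ s.erase z}) =>
            (g : Fin (k-1) → {a : Fin n // a ∈ s.erase z})) hg) ⟨j - 1, hj'⟩
          have hval := congrArg Subtype.val this
          change (π₁ ^ ((j - 1 : ℕ) + 1)) z = (π₂ ^ ((j - 1 : ℕ) + 1)) z at hval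
          simpa [Nat.sub_add_cancel hj0] using hval
      apply Equiv.ext
      intro a
      by_cases ha : a ∈ s
      · obtain ⟨j, hj, hja⟩ := (isCycleOn_s horb₁).exists_pow_eq
          (z_mem_s horb₁) (by exact ha)
        rw [hk] at hj
        have hmodlt : (j + 1) % k < k := Nat.mod_lt _ (by omega)
        have h1 : π₁ a = (π₁ ^ ((j+1) % k)) z := by
          rw [← hja, ← Perm.mul_apply, ← pow_succ']
          refine ((isCycleOn_s horb₁).pow_apply_eq_pow_apply (z_mem_s horb₁)).2 ?_
          rw [hk]
          exact (Nat.mod_modEq _ _).symm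
        have hja₂ : (π₂ ^ j) z = a := by rw [← hpow j hj]; exact hja
        have h2 : π₂ a = (π₂ ^ ((j+1) % k)) z := by
          rw [← hja₂, ← Perm.mul_apply, ← pow_succ']
          refine ((isCycleOn_s horb₂).pow_apply_eq_pow_apply (z_mem_s horb₂)).2 ?_
          rw [hk]
          exact (Nat.mod_modEq _ _).symm
        rw [h1, h2, hpow _ hmodlt]
      · rw [apply_eq_of_not_mem hx (compl_invariant horb₁) ha,
          apply_eq_of_not_mem hx (compl_invariant horb₂) ha, hres]
    · -- surjectivity
      rintro ⟨g, σ⟩ hp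
      obtain ⟨-, hσ⟩ := Finset.mem_product.1 hp
      have hσm : Nat.lcm (orderOf σ) k = m := (Finset.mem_filter.1 hσ).2
      classical
      set lst : List (Fin n) := z :: List.ofFn (fun j : Fin (k-1) => ((g j : {a : Fin n // a ∈ s.erase z}) : Fin n)) with hlst
      have hnd : lst.Nodup := by
        refine List.nodup_cons.2 ⟨?_, ?_⟩
        · intro hmem
          obtain ⟨j, hj⟩ := Set.mem_range.1 ((List.mem_ofFn' _ _).1 hmem)
          exact (Finset.mem_erase.1 (g j).2).1 hj
        · exact List.nodup_ofFn.2 (fun j₁ j₂ h => g.injective (Subtype.ext h))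
      have hlen : lst.length = k := by
        simp [hlst, List.length_ofFn, Nat.sub_add_cancel hk1]
      have htf : lst.toFinset = s := by
        apply Finset.eq_of_subset_of_card_le
        · intro a hams
          rw [List.mem_toFinset] at hams
          rcases List.mem_cons.1 hams with rfl | hmem
          · exact hzs
          · obtain ⟨j, hj⟩ := Set.mem_range.1 ((List.mem_ofFn' _ _).1 hmem)
            exact hj ▸ Finset.mem_erase.1 (g j).2 |>.2
        · rw [List.card_toFinset, hnd.dedup, hlen, hk]
      set c : Perm (Fin n) := lst.formPerm with hc
      have hcfix : ∀ a : Fin n, a ∉ s → c a = a := by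
        intro a ha
        apply List.formPerm_apply_of_notMem
        rw [← List.mem_toFinset, htf]; exact ha
      have hccyc : c.IsCycleOn (s : Set (Fin n)) ∧ orderOf c = k := by
        rcases eq_or_lt_of_le hk1 with h1 | h2
        · -- k = 1
          have hkeq : k = 1 := h1.symm
          have hnil : List.ofFn (fun j : Fin (k-1) => ((g j : {a : Fin n // a ∈ s.erase z}) : Fin n)) = [] := by
            apply List.eq_nil_of_length_eq_zero
            simp [hkeq]
          have hc1 : c = 1 := by rw [hc, hlst, hnil, List.formPerm_singleton]
          have hseq : s = {z} := by
            symm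
            apply Finset.eq_of_subset_of_card_le
            · exact Finset.singleton_subset_iff.2 hzs
            · rw [hk, hkeq, Finset.card_singleton]
          constructor
          · rw [hc1, hseq]
            simp only [Finset.coe_singleton]
            exact Equiv.Perm.isCycleOn_singleton.2 rfl
          · rw [hc1, orderOf_one, hkeq]
        · -- k ≥ 2
          have h2' : 2 ≤ lst.length := by rw [hlen]; omega
          have hcyc := List.isCycle_formPerm hnd h2'
          have hsupp : c.support = s := by
            rw [hc, List.support_formPerm_of_nodup lst hnd, htf]
            intro y hy
            rw [hy] at hlen
            simp at hlen
            omega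
          constructor
          · have := hcyc.isCycleOn
            rw [← Perm.coe_support_eq_set_support, hsupp] at this
            exact this
          · rw [hcyc.orderOf, hsupp, hk]
      obtain ⟨hccyc', hcord⟩ := hccyc
      refine ⟨c * extP hx σ, Finset.mem_filter.2 ⟨Finset.mem_univ _, ?_, ?_⟩, ?_⟩
      · rw [orderOf_mul hx hcfix σ, hcord, Nat.lcm_comm, hσm]
      · exact orb_mul hx hzs hccyc' σ
      · -- forward image equals (g, σ)
        refine Prod.ext ?_ ?_
        · apply Function.Embedding.ext
          intro j
          apply Subtype.ext
          simp only [Function.Embedding.coeFn_mk]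
          change ((c * extP hx σ) ^ ((j : ℕ) + 1)) z = _
          rw [(mul_pow_apply hx hzs hccyc' σ ((j : ℕ) + 1)).1]
          show ((z :: List.ofFn fun j : Fin (k-1) =>
            ((g j : {a : Fin n // a ∈ s.erase z}) : Fin n)).formPerm ^ ((j : ℕ) + 1)) z = ↑(g j)
          rw [List.formPerm_pow_apply_head z _ hnd ((j : ℕ) + 1)]
          have hidx : ((j : ℕ) + 1) % (z :: List.ofFn fun j : Fin (k-1) =>
              ((g j : {a : Fin n // a ∈ s.erase z}) : Fin n)).length = (j : ℕ) + 1 := by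
            rw [show (z :: List.ofFn fun j : Fin (k-1) =>
              ((g j : {a : Fin n // a ∈ s.erase z}) : Fin n)).length = k from hlen]
            exact Nat.mod_eq_of_lt (by have := j.2; omega)
          simp only [hidx, List.getElem_cons_succ, List.getElem_ofFn]
        · exact res_mul hx hcfix σ (compl_invariant (orb_mul hx hzs hccyc' σ))
  · rw [if_neg hkm]
    rw [Finset.card_eq_zero, Finset.filter_eq_empty_iff]
    intro π _
    rintro ⟨hord, horb⟩
    exact hkm (hord ▸ horder π horb ▸ Nat.dvd_lcm_left _ _)

lemma count_sets (z : Fin n) (k : ℕ) (hk : 1 ≤ k) :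
    ((univ.filter (fun s : Finset (Fin n) => z ∈ s)).filter (fun s => s.card = k)).card
      = (n - 1).choose (k - 1) := by
  have hcard : ((univ.erase z).powersetCard (k-1)).card = (n-1).choose (k-1) := by
    rw [Finset.card_powersetCard, Finset.card_erase_of_mem (Finset.mem_univ z),
      Finset.card_univ, Fintype.card_fin]
  rw [← hcard]
  apply Finset.card_bij (fun s _ => s.erase z)
  · intro s hs
    obtain ⟨hs1, hs2⟩ := Finset.mem_filter.1 hs
    obtain ⟨-, hzmem⟩ := Finset.mem_filter.1 hs1
    refine Finset.mem_powersetCard.2 ⟨Finset.erase_subset_erase z (Finset.subset_univ s), ?_⟩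
    rw [Finset.card_erase_of_mem hzmem, hs2]
  · intro s₁ hs₁ s₂ hs₂ hEq
    obtain ⟨hs1, -⟩ := Finset.mem_filter.1 hs₁
    obtain ⟨-, hz1⟩ := Finset.mem_filter.1 hs1
    obtain ⟨hs2', -⟩ := Finset.mem_filter.1 hs₂
    obtain ⟨-, hz2⟩ := Finset.mem_filter.1 hs2'
    rw [← Finset.insert_erase hz1, ← Finset.insert_erase hz2, hEq]
  · intro t ht
    obtain ⟨hsub, hcardt⟩ := Finset.mem_powersetCard.1 ht
    have hznt : z ∉ t := fun hzt => (Finset.mem_erase.1 (hsub hzt)).1 rfl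
    refine ⟨insert z t, Finset.mem_filter.2 ⟨Finset.mem_filter.2
      ⟨Finset.mem_univ _, Finset.mem_insert_self _ _⟩, ?_⟩, ?_⟩
    · rw [Finset.card_insert_of_notMem hznt, hcardt]; omega
    · rw [Finset.erase_insert hznt]



lemma key_identity (m : ℕ) (hn : 0 < n) :
    (univ.filter (fun π : Perm (Fin n) => orderOf π = m)).card
      = ∑ x ∈ Finset.range n, if (n - x) ∣ m then
          (n-1).choose (n - x - 1) * ((n - x - 1).factorial *
            (univ.filter (fun σ : Perm (Fin x) => Nat.lcm (orderOf σ) (n - x) = m)).card)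
        else 0 := by
  classical
  set z : Fin n := ⟨0, hn⟩ with hz
  set T : Finset (Finset (Fin n)) := univ.filter (fun s => z ∈ s) with hT
  -- fiberwise over orbit of z
  have h1 : (univ.filter (fun π : Perm (Fin n) => orderOf π = m)).card
      = ∑ s ∈ T, (univ.filter (fun π : Perm (Fin n) => orderOf π = m ∧ orb π z = s)).card := by
    rw [Finset.card_eq_sum_card_fiberwise
      (f := fun π => orb π z) (t := T)
      (fun π _ => Finset.mem_filter.2 ⟨Finset.mem_univ _, z_mem_orb π z⟩)]
    exact Finset.sum_congr rfl fun s _ => by rw [Finset.filter_filter]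
  -- fiber cards
  have h2 : ∀ s ∈ T, (univ.filter (fun π : Perm (Fin n) => orderOf π = m ∧ orb π z = s)).card
      = if s.card ∣ m then (s.card - 1).factorial *
          (univ.filter (fun σ : Perm (Fin (n - s.card)) =>
            Nat.lcm (orderOf σ) s.card = m)).card else 0 := by
    intro s hs
    have hzs : z ∈ s := (Finset.mem_filter.1 hs).2
    exact fiber_card m hzs (by rw [Finset.card_compl, Fintype.card_fin]) rfl
  rw [h1, Finset.sum_congr rfl h2]
  -- group by cardinality
  have h3 : ∑ s ∈ T, (if s.card ∣ m then (s.card - 1).factorial *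
          (univ.filter (fun σ : Perm (Fin (n - s.card)) =>
            Nat.lcm (orderOf σ) s.card = m)).card else 0)
      = ∑ k ∈ Finset.range (n+1), (T.filter (fun s => s.card = k)).card *
          (if k ∣ m then (k - 1).factorial *
          (univ.filter (fun σ : Perm (Fin (n - k)) =>
            Nat.lcm (orderOf σ) k = m)).card else 0) := by
    rw [← Finset.sum_fiberwise_of_maps_to (g := fun s : Finset (Fin n) => s.card)
      (t := Finset.range (n+1))
      (fun s _ => Finset.mem_range.2 (Nat.lt_succ_of_le (le_trans (Finset.card_le_univ s)
        (le_of_eq (Fintype.card_fin n)))))]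
    refine Finset.sum_congr rfl fun k _ => ?_
    rw [Finset.sum_congr rfl (fun s hs => by
      rw [(Finset.mem_filter.1 hs).2]), Finset.sum_const, smul_eq_mul]
  rw [h3]
  -- strip k = 0 and reflect
  have h0 : (T.filter (fun s => s.card = 0)).card * (if 0 ∣ m then (0 - 1).factorial *
      (univ.filter (fun σ : Perm (Fin (n - 0)) => Nat.lcm (orderOf σ) 0 = m)).card else 0) = 0 := by
    have : (T.filter (fun s => s.card = 0)).card = 0 := by
      rw [Finset.card_eq_zero, Finset.filter_eq_empty_iff]
      intro s hs h0'
      have hzs : z ∈ s := (Finset.mem_filter.1 hs).2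
      rw [Finset.card_eq_zero.1 h0'] at hzs
      exact absurd hzs (Finset.notMem_empty z)
    rw [this, Nat.zero_mul]
  rw [Finset.sum_range_succ', h0, Nat.add_zero]
  rw [← Finset.sum_range_reflect]
  refine Finset.sum_congr rfl fun x hx => ?_
  have hxn : x < n := Finset.mem_range.1 hx
  have hidx : n - 1 - x + 1 = n - x := by omega
  rw [hidx]
  have hcnt : (T.filter (fun s => s.card = n - x)).card = (n-1).choose (n - x - 1) :=
    count_sets z (n - x) (by omega)
  rw [hcnt]
  have hnnx : n - (n - x) = x := by omega
  by_cases hdvd : (n - x) ∣ m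
  · rw [if_pos hdvd, if_pos hdvd, hnnx]
  · rw [if_neg hdvd, if_neg hdvd, Nat.mul_zero]

end ProbOrderRec

theorem prob_order_recursion (m n : ℕ) (hm : 0 < m) (hn : 0 < n) :
    ((Finset.univ.filter (fun π : Equiv.Perm (Fin n) => orderOf π = m)).card : ℝ) /
        (Nat.factorial n) =
      (1 / n) * ∑ x ∈ Finset.range n,
        if (n - x) ∣ m then
          ((Finset.univ.filter
              (fun π : Equiv.Perm (Fin x) => Nat.lcm (orderOf π) (n - x) = m)).card : ℝ) /
            (Nat.factorial x)
        else 0 := by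
  rw [ProbOrderRec.key_identity m hn]
  rw [Nat.cast_sum, Finset.sum_div, Finset.mul_sum]
  refine Finset.sum_congr rfl fun x hx => ?_
  have hxn : x < n := Finset.mem_range.1 hx
  by_cases hdvd : (n - x) ∣ m
  · rw [if_pos hdvd, if_pos hdvd]
    set N : ℕ := ((Finset.univ.filter
        (fun π : Equiv.Perm (Fin x) => Nat.lcm (orderOf π) (n - x) = m)).card : ℕ) with hN
    have hfact : (n-1).choose (n - x - 1) * (n - x - 1).factorial * x.factorial
        = (n-1).factorial := by
      have h := Nat.choose_mul_factorial_mul_factorial (show n - x - 1 ≤ n - 1 by omega)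
      rw [show n - 1 - (n - x - 1) = x by omega] at h
      exact h
    have hnfact : (n.factorial) = n * (n-1).factorial := by
      conv_lhs => rw [show n = (n-1)+1 by omega]
      rw [Nat.factorial_succ, Nat.sub_add_cancel hn]
    have hR : ((n-1).choose (n - x - 1) * (n - x - 1).factorial * x.factorial * n : ℝ)
        = (n.factorial : ℝ) := by
      rw_mod_cast [hfact, hnfact]
      push_cast
      ring
    have hx0 : (x.factorial : ℝ) ≠ 0 := Nat.cast_ne_zero.2 (Nat.factorial_ne_zero x)
    have hn0 : (n : ℝ) ≠ 0 := Nat.cast_ne_zero.2 hn.ne'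
    have hnf0 : ((n.factorial : ℝ)) ≠ 0 := Nat.cast_ne_zero.2 (Nat.factorial_ne_zero n)
    push_cast
    rw [div_eq_iff hnf0]
    rw [one_div, mul_comm]
    field_simp
    linear_combination (N : ℝ) * hR
  · rw [if_neg hdvd, if_neg hdvd]
    simp
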